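/- arXiv:1705.08270 — 2 statements merged into one kernel-verified Lean document; each statement's English description precedes it below -/
import Mathlib

section
/- Let V_n be the set of pairs of integers (x,y) with 2^{n−1} ≤ y < 2^n, 0 ≤ x ≤ y and (rep₂(y) choose rep₂(x)) > 0. Then #V_n = 2·3^{n−1} for all n ≥ 1. -/
/-- The binomial coefficient of words: the number of occurrences of the second
word as a scattered subsequence of the first. -/
def wb {A : Type*} [DecidableEq A] : List A → List A → ℕ
  | _, [] => 1
  | [], _ :: _ => 0
  | a :: u, b :: v => wb u (b :: v) + (if a = b then wb u v else 0)

/-- Binary representation of a natural number, most significant bit first,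
with no leading zeros (`rep2 0 = []`). -/
def rep2 (n : ℕ) : List Bool := (Nat.bits n).reverse

lemma wb_pos {A : Type*} [DecidableEq A] : ∀ (u v : List A), 0 < wb u v ↔ v.Sublist u
  | _, [] => by simp [wb, List.nil_sublist]
  | [], b :: v => by simp [wb]
  | a :: u, b :: v => by
    rw [wb]
    constructor
    · intro h
      by_cases h1 : 0 < wb u (b :: v)
      · exact ((wb_pos u (b :: v)).mp h1).cons a
      · have : a = b ∧ 0 < wb u v := by
          by_cases hab : a = b <;> simp [hab] at h ⊢ <;> omega
        obtain ⟨rfl, h2⟩ := this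
        exact ((wb_pos u v).mp h2).cons₂ a
    · intro h
      cases h with
      | cons _ h' => have := (wb_pos u (b :: v)).mpr h'; omega
      | cons_cons _ h' => have := (wb_pos u v).mpr h'; simp; omega

lemma bits_eq_nil {n : ℕ} : n.bits = [] ↔ n = 0 := by
  rw [← List.length_eq_zero_iff, Nat.size_eq_bits_len, Nat.size_eq_zero]

lemma bits_injective : ∀ m n : ℕ, m.bits = n.bits → m = n := by
  intro m
  induction m using Nat.strong_induction_on with
  | _ m ih =>
    intro n h
    rcases eq_or_ne m 0 with rfl | hm
    · exact (bits_eq_nil.mp (by simpa using h.symm)).symm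
    · have hb : m.bodd = n.bodd := by
        rw [Nat.bodd_eq_bits_head, Nat.bodd_eq_bits_head, h]
      have hd : m.div2.bits = n.div2.bits := by
        rw [Nat.div2_bits_eq_tail, Nat.div2_bits_eq_tail, h]
      have hlt : m.div2 < m := by
        rw [Nat.div2_val]; omega
      have h2 := ih _ hlt _ hd
      calc m = Nat.bit m.bodd m.div2 := (Nat.bit_bodd_div2 m).symm
        _ = Nat.bit n.bodd n.div2 := by rw [hb, h2]
        _ = n := Nat.bit_bodd_div2 n

lemma rep2_injective : Function.Injective rep2 := by
  intro a b h
  exact bits_injective a b (List.reverse_injective h)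

lemma rep2_zero : rep2 0 = [] := by simp [rep2]

lemma rep2_one : rep2 1 = [true] := by simp [rep2]

lemma rep2_even {n : ℕ} (hn : n ≠ 0) : rep2 (2 * n) = rep2 n ++ [false] := by
  simp [rep2, Nat.bit0_bits n hn]

lemma rep2_odd (n : ℕ) : rep2 (2 * n + 1) = rep2 n ++ [true] := by
  simp [rep2, Nat.bit1_bits n]

lemma le_of_rep2_sublist {a b : ℕ} (h : (rep2 a).Sublist (rep2 b)) : a ≤ b := by
  have hlen : a.size ≤ b.size := by
    have := h.length_le
    simpa [rep2, Nat.size_eq_bits_len] using this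
  rcases lt_or_eq_of_le hlen with hlt | heq
  · have h1 : a < 2 ^ a.size := Nat.lt_size_self a
    have h2 : 2 ^ a.size ≤ b := Nat.lt_size.mp hlt
    omega
  · have : rep2 a = rep2 b := h.eq_of_length (by simpa [rep2, Nat.size_eq_bits_len] using heq)
    exact (rep2_injective this).le

def T (y : ℕ) : Finset ℕ := (Finset.range (y + 1)).filter (fun x => (rep2 x).Sublist (rep2 y))

lemma mem_T {x y : ℕ} : x ∈ T y ↔ (rep2 x).Sublist (rep2 y) := by
  simp only [T, Finset.mem_filter, Finset.mem_range, Nat.lt_succ_iff]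
  exact ⟨fun h => h.2, fun h => ⟨le_of_rep2_sublist h, h⟩⟩

lemma zero_mem_T (y : ℕ) : 0 ∈ T y := mem_T.mpr (by rw [rep2_zero]; exact List.nil_sublist _)

lemma T_even (y : ℕ) (hy : y ≠ 0) :
    T (2 * y) = T y ∪ ((T y).erase 0).image (fun x => 2 * x) := by
  ext x
  simp only [Finset.mem_union, Finset.mem_image, Finset.mem_erase, mem_T, rep2_even hy]
  constructor
  · intro h
    rcases List.sublist_append_iff.mp h with ⟨l₁, l₂, hx, h₁, h₂⟩
    rcases List.sublist_singleton.mp h₂ with rfl | rfl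
    · left; rw [List.append_nil] at hx; rwa [hx]
    · right
      rcases Nat.even_or_odd x with ⟨k, hk⟩ | ⟨k, hk⟩
      · have hxk : x = 2 * k := by omega
        rcases eq_or_ne k 0 with rfl | hk0
        · simp [hxk, rep2_zero] at hx
        · rw [hxk, rep2_even hk0] at hx
          have := (List.append_inj' hx.symm rfl).1
          exact ⟨k, ⟨hk0, this ▸ h₁⟩, hxk.symm⟩
      · rw [hk, rep2_odd] at hx
        have := (List.append_inj' hx.symm rfl).2
        simp at this
  · rintro (h | ⟨k, ⟨hk0, hk⟩, rfl⟩)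
    · exact h.trans (List.sublist_append_left _ _)
    · rw [rep2_even hk0]
      exact hk.append_right _

lemma T_odd (y : ℕ) (_hy : y ≠ 0) :
    T (2 * y + 1) = T y ∪ (T y).image (fun x => 2 * x + 1) := by
  ext x
  simp only [Finset.mem_union, Finset.mem_image, mem_T, rep2_odd y]
  constructor
  · intro h
    rcases List.sublist_append_iff.mp h with ⟨l₁, l₂, hx, h₁, h₂⟩
    rcases List.sublist_singleton.mp h₂ with rfl | rfl
    · left; rw [List.append_nil] at hx; rwa [hx]
    · right
      rcases Nat.even_or_odd x with ⟨k, hk⟩ | ⟨k, hk⟩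
      · have hxk : x = 2 * k := by omega
        rcases eq_or_ne k 0 with rfl | hk0
        · simp [hxk, rep2_zero] at hx
        · rw [hxk, rep2_even hk0] at hx
          have := (List.append_inj' hx.symm rfl).2
          simp at this
      · rw [hk, rep2_odd] at hx
        have := (List.append_inj' hx.symm rfl).1
        exact ⟨k, this ▸ h₁, hk.symm⟩
  · rintro (h | ⟨k, hk, rfl⟩)
    · exact h.trans (List.sublist_append_left _ _)
    · rw [rep2_odd]
      exact hk.append_right _

lemma T_inter_even (y : ℕ) :
    T y ∩ ((T y).erase 0).image (fun x => 2 * x)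
      = (T y).filter (fun x => x ≠ 0 ∧ Even x) := by
  ext x
  simp only [Finset.mem_inter, Finset.mem_image, Finset.mem_erase, Finset.mem_filter]
  constructor
  · rintro ⟨hx, k, ⟨hk0, _⟩, rfl⟩
    exact ⟨hx, by omega, ⟨k, by omega⟩⟩
  · rintro ⟨hx, hx0, k, hk⟩
    have hxk : x = 2 * k := by omega
    have hk0 : k ≠ 0 := by omega
    refine ⟨hx, k, ⟨hk0, ?_⟩, hxk.symm⟩
    have : (rep2 k).Sublist (rep2 x) := by
      rw [hxk, rep2_even hk0]; exact List.sublist_append_left _ _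
    exact mem_T.mpr (this.trans (mem_T.mp hx))

lemma T_inter_odd (y : ℕ) :
    T y ∩ (T y).image (fun x => 2 * x + 1) = (T y).filter (fun x => Odd x) := by
  ext x
  simp only [Finset.mem_inter, Finset.mem_image, Finset.mem_filter]
  constructor
  · rintro ⟨hx, k, _, rfl⟩
    exact ⟨hx, ⟨k, by omega⟩⟩
  · rintro ⟨hx, k, hk⟩
    have hxk : x = 2 * k + 1 := by omega
    refine ⟨hx, k, ?_, hxk.symm⟩
    have : (rep2 k).Sublist (rep2 x) := by
      rw [hxk, rep2_odd]; exact List.sublist_append_left _ _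
    exact mem_T.mpr (this.trans (mem_T.mp hx))

lemma T_card_step (y : ℕ) (hy : y ≠ 0) :
    (T (2 * y)).card + (T (2 * y + 1)).card = 3 * (T y).card := by
  set c := (T y).card with hc
  have hc1 : 1 ≤ c := Finset.card_pos.mpr ⟨0, zero_mem_T y⟩
  have hinj2 : Function.Injective (fun x : ℕ => 2 * x) := fun a b h => by dsimp at h; omega
  have hinj21 : Function.Injective (fun x : ℕ => 2 * x + 1) := fun a b h => by dsimp at h; omega
  have hD0 : (((T y).erase 0).image (fun x => 2 * x)).card = c - 1 := by
    rw [Finset.card_image_of_injective _ hinj2, Finset.card_erase_of_mem (zero_mem_T y)]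
  have hD1 : ((T y).image (fun x => 2 * x + 1)).card = c := by
    rw [Finset.card_image_of_injective _ hinj21]
  have hE : (T (2 * y)).card + ((T y).filter (fun x => x ≠ 0 ∧ Even x)).card = c + (c - 1) := by
    rw [T_even y hy, ← T_inter_even y, Finset.card_union_add_card_inter, hD0]
  have hO : (T (2 * y + 1)).card + ((T y).filter (fun x => Odd x)).card = c + c := by
    rw [T_odd y hy, ← T_inter_odd y, Finset.card_union_add_card_inter, hD1]
  have hEO : ((T y).filter (fun x => x ≠ 0 ∧ Even x)).card
      + ((T y).filter (fun x => Odd x)).card = c - 1 := by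
    rw [← Finset.card_union_of_disjoint, ← Finset.filter_or]
    · rw [show ((T y).filter (fun x => (x ≠ 0 ∧ Even x) ∨ Odd x)) = (T y).erase 0 from ?_,
        Finset.card_erase_of_mem (zero_mem_T y)]
      ext z
      simp only [Finset.mem_filter, Finset.mem_erase, Nat.even_iff, Nat.odd_iff]
      constructor
      · rintro ⟨hz, h⟩; exact ⟨by omega, hz⟩
      · rintro ⟨hz, h⟩; exact ⟨h, by omega⟩
    · rw [Finset.disjoint_filter]
      rintro x _ ⟨_, hx⟩
      simp [Nat.even_iff] at hx ⊢
      omega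
  omega

lemma T_one : T 1 = {0, 1} := by
  ext x
  rw [mem_T, rep2_one, List.sublist_singleton]
  constructor
  · rintro (h | h)
    · simp [rep2_injective (h.trans rep2_zero.symm)]
    · simp [rep2_injective (h.trans rep2_one.symm)]
  · intro h
    rcases Finset.mem_insert.mp h with rfl | h
    · left; exact rep2_zero
    · right; rw [Finset.mem_singleton.mp h]; exact rep2_one

lemma sum_double (f : ℕ → ℕ) (a b : ℕ) (h : a ≤ b) :
    ∑ y ∈ Finset.Ico (2 * a) (2 * b), f y
      = ∑ y ∈ Finset.Ico a b, (f (2 * y) + f (2 * y + 1)) := by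
  induction b, h using Nat.le_induction with
  | base => simp
  | succ b hb ih =>
    rw [Finset.sum_Ico_succ_top (by omega),
      show 2 * (b + 1) = (2 * b + 1) + 1 by ring,
      Finset.sum_Ico_succ_top (by omega), Finset.sum_Ico_succ_top (by omega), ih]
    ring

lemma main_sum (m : ℕ) :
    ∑ y ∈ Finset.Ico (2 ^ m) (2 ^ (m + 1)), (T y).card = 2 * 3 ^ m := by
  induction m with
  | zero =>
    simp [Finset.sum_Ico_eq_sum_range, T_one]
  | succ m ih =>
    rw [show (2:ℕ) ^ (m + 1) = 2 * 2 ^ m by ring, show (2:ℕ) ^ (m + 2) = 2 * (2 * 2 ^ m) by ring,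
      sum_double _ _ _ (Nat.le_mul_of_pos_left _ (by norm_num))]
    have : ∀ y ∈ Finset.Ico (2 ^ m) (2 * 2 ^ m), (T (2 * y)).card + (T (2 * y + 1)).card
        = 3 * (T y).card := by
      intro y hy
      rw [Finset.mem_Ico] at hy
      exact T_card_step y (by have := Nat.pow_pos (n := m) (by norm_num : 0 < 2); omega)
    rw [Finset.sum_congr rfl this, ← Finset.mul_sum,
      show (2:ℕ) * 2 ^ m = 2 ^ (m + 1) by ring, ih]
    ring

theorem stmt_11 (n : ℕ) (hn : 1 ≤ n) :
    ((Finset.range (2 ^ n) ×ˢ Finset.range (2 ^ n)).filter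
      (fun p => 2 ^ (n - 1) ≤ p.2 ∧ p.1 ≤ p.2 ∧ 0 < wb (rep2 p.2) (rep2 p.1))).card =
      2 * 3 ^ (n - 1) := by
  obtain ⟨m, rfl⟩ : ∃ m, n = m + 1 := ⟨n - 1, by omega⟩
  simp only [Nat.add_sub_cancel]
  have hset : (Finset.range (2 ^ (m + 1)) ×ˢ Finset.range (2 ^ (m + 1))).filter
      (fun p => 2 ^ m ≤ p.2 ∧ p.1 ≤ p.2 ∧ 0 < wb (rep2 p.2) (rep2 p.1))
      = (Finset.Ico (2 ^ m) (2 ^ (m + 1))).biUnion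
        (fun y => (T y).image (fun x => (x, y))) := by
    ext ⟨x, y⟩
    simp only [Finset.mem_filter, Finset.mem_product, Finset.mem_range, Finset.mem_biUnion,
      Finset.mem_Ico, Finset.mem_image, Prod.mk.injEq]
    constructor
    · rintro ⟨⟨hx, hy⟩, h1, h2, h3⟩
      exact ⟨y, ⟨h1, hy⟩, x, mem_T.mpr ((wb_pos _ _).mp h3), rfl, rfl⟩
    · rintro ⟨y', ⟨h1, h2⟩, x', hx', rfl, rfl⟩
      have hs := mem_T.mp hx'
      have hle := le_of_rep2_sublist hs
      exact ⟨⟨by omega, h2⟩, h1, hle, (wb_pos _ _).mpr hs⟩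
  rw [hset, Finset.card_biUnion, ← main_sum m]
  · exact Finset.sum_congr rfl fun y _ =>
      Finset.card_image_of_injective _ (fun a b h => (Prod.mk.injEq _ _ _ _ ▸ h).1)
  · intro y₁ _ y₂ _ hne
    simp only [Finset.disjoint_left, Finset.mem_image]
    rintro p ⟨a, _, rfl⟩ ⟨b, _, hb⟩
    exact hne (Prod.mk.injEq _ _ _ _ ▸ hb).2.symm
end

section
/- Let u, v be binary words with u nonempty, v occurring as a subsequence of u, and let k be an integer with 2^k > |u|. Let r be the number of occurrences of v in u and let i₁,…,i_r be, for each occurrence, the number of zeros of u strictly after that occurrence. Then (u 0^{2^k} 1 choose v 0^{2^k} 1) = Σ_{ℓ=1}^{r} (2^k + i_ℓ choose 2^k). -/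
/-- The occurrences of `v` as a scattered subsequence of `u`, given as the sets
of indices of `u` that, read in increasing order, spell out `v`. -/
def occurrences (u v : List Bool) : Finset (Finset (Fin u.length)) :=
  Finset.univ.filter (fun s => (s.sort (· ≤ ·)).map u.get = v)

/-- The number of zeros of `u` strictly after the occurrence `s`. -/
def zerosAfter (u : List Bool) (s : Finset (Fin u.length)) : ℕ :=
  (Finset.univ.filter
    (fun j : Fin u.length => (∀ i ∈ s, i < j) ∧ u.get j = false)).card

open Finset

/-! ### Basic `wb` lemmas -/

@[simp] lemma wb_nil_right {A : Type*} [DecidableEq A] (u : List A) : wb u [] = 1 := by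
  cases u <;> rfl

@[simp] lemma wb_cons_cons {A : Type*} [DecidableEq A] (a b : A) (u v : List A) :
    wb (a :: u) (b :: v) = wb u (b :: v) + (if a = b then wb u v else 0) := rfl

@[simp] lemma wb_nil_left {A : Type*} [DecidableEq A] (b : A) (v : List A) :
    wb [] (b :: v) = 0 := rfl

lemma wb_nil_left' {A : Type*} [DecidableEq A] {v : List A} (hv : v ≠ []) : wb [] v = 0 := by
  cases v with
  | nil => exact absurd rfl hv
  | cons b w => rfl

lemma wb_append_singleton {A : Type*} [DecidableEq A] (x : List A) : ∀ (y : List A) (a b : A),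
    wb (x ++ [a]) (y ++ [b]) = wb x (y ++ [b]) + if a = b then wb x y else 0 := by
  induction x with
  | nil =>
    intro y a b
    cases y with
    | nil => simp
    | cons c y' => simp [wb_nil_left' (by simp : y' ++ [b] ≠ [])]
  | cons c x' ih =>
    intro y a b
    cases y with
    | nil =>
      simp only [List.nil_append, List.cons_append, wb_cons_cons, wb_nil_right]
      have := ih [] a b
      simp only [List.nil_append, wb_nil_right] at this
      rw [this]; ring
    | cons d y' =>
      simp only [List.cons_append, wb_cons_cons]
      rw [show d :: (y' ++ [b]) = (d :: y') ++ [b] from rfl, ih (d :: y') a b, ih y' a b]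
      split_ifs <;> ring

lemma sublist_of_wb_ne_zero {A : Type*} [DecidableEq A] :
    ∀ (x y : List A), wb x y ≠ 0 → y.Sublist x := by
  intro x
  induction x with
  | nil =>
    intro y h
    cases y with
    | nil => exact List.Sublist.refl _
    | cons b w => simp at h
  | cons a x' ih =>
    intro y h
    cases y with
    | nil => exact List.nil_sublist _
    | cons b w =>
      simp only [wb_cons_cons] at h
      by_cases h1 : wb x' (b :: w) = 0
      · have h2 : (if a = b then wb x' w else 0) ≠ 0 := by omega
        split at h2
        · next hab => exact hab ▸ (ih w h2).cons₂ _
        · omega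
      · exact (ih _ h1).cons _

/-! ### Sorting lemmas -/

lemma sortMap {n m : ℕ} (f : Fin n ↪ Fin m) (hf : StrictMono f) (s : Finset (Fin n)) :
    (s.map f).sort (· ≤ ·) = (s.sort (· ≤ ·)).map f := by
  refine (fun hp hs => List.Perm.eq_of_pairwise' (Finset.pairwise_sort _ _) hs hp) ?_ ?_
  · rw [← Multiset.coe_eq_coe, Finset.sort_eq, Finset.map_val, ← Finset.sort_eq (s := s) (r := (· ≤ ·))]
    rw [Multiset.map_coe]
  · exact List.Pairwise.map f (fun a b h => hf.monotone h) (Finset.pairwise_sort _ _)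

lemma sort_eq_nil_iff {α : Type*} [LinearOrder α] (s : Finset α) :
    s.sort (· ≤ ·) = [] ↔ s = ∅ := by
  constructor
  · intro h
    have := Finset.sort_eq (s := s) (r := (· ≤ ·))
    rw [h] at this
    exact Finset.val_eq_zero.mp this.symm
  · rintro rfl; exact Finset.sort_empty _

lemma sort_insert_zero {n : ℕ} (s : Finset (Fin (n + 1))) (h : 0 ∉ s) :
    (insert 0 s).sort (· ≤ ·) = 0 :: s.sort (· ≤ ·) :=
  Finset.sort_insert _ (fun b _ => Fin.zero_le b) h

lemma castLE_strictMono {n m : ℕ} (h : n ≤ m) : StrictMono (Fin.castLEEmb h) :=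
  fun _ _ hij => hij

lemma zero_not_mem_map_succ {n : ℕ} (t : Finset (Fin n)) :
    (0 : Fin (n + 1)) ∉ t.map (Fin.succEmb n) := by
  simp only [Finset.mem_map, Fin.coe_succEmb]
  rintro ⟨i, _, hi⟩
  exact Fin.succ_ne_zero i hi

lemma exists_map_succ {n : ℕ} (s : Finset (Fin (n + 1))) (h : 0 ∉ s) :
    ∃ t : Finset (Fin n), s = t.map (Fin.succEmb n) := by
  have hsub : s ⊆ Finset.univ.map (Fin.succEmb n) := by
    intro i hi
    simp only [Finset.mem_map, Finset.mem_univ, true_and, Fin.coe_succEmb]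
    exact Fin.exists_succ_eq.mpr (by rintro rfl; exact h hi)
  obtain ⟨t, -, rfl⟩ := Finset.subset_map_iff.mp hsub
  exact ⟨t, rfl⟩

lemma exists_map_castLE {n m : ℕ} (h : n ≤ m) (s : Finset (Fin m))
    (hall : ∀ i ∈ s, (i : ℕ) < n) :
    ∃ t : Finset (Fin n), s = t.map (Fin.castLEEmb h) := by
  have hsub : s ⊆ Finset.univ.map (Fin.castLEEmb h) := by
    intro i hi
    simp only [Finset.mem_map, Finset.mem_univ, true_and]
    exact ⟨⟨(i : ℕ), hall i hi⟩, by ext; simp⟩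
  obtain ⟨t, -, rfl⟩ := Finset.subset_map_iff.mp hsub
  exact ⟨t, rfl⟩

lemma filter_val_lt_eq {n m : ℕ} (h : n ≤ m) :
    (Finset.univ : Finset (Fin m)).filter (fun j : Fin m => (j : ℕ) < n) =
      (Finset.univ : Finset (Fin n)).map (Fin.castLEEmb h) := by
  ext j
  simp only [Finset.mem_filter, Finset.mem_univ, true_and, Finset.mem_map]
  constructor
  · intro hj; exact ⟨⟨(j : ℕ), hj⟩, by ext; simp⟩
  · rintro ⟨i, -, rfl⟩; exact i.isLt

/-! ### occurrences lemmas -/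

lemma mem_occurrences {u v : List Bool} {s : Finset (Fin u.length)} :
    s ∈ occurrences u v ↔ (s.sort (· ≤ ·)).map u.get = v := by
  simp [occurrences]

lemma occurrences_nil_right (u : List Bool) : occurrences u [] = {∅} := by
  ext s
  simp only [mem_occurrences, Finset.mem_singleton, List.map_eq_nil_iff, sort_eq_nil_iff]

lemma occurrences_nil_left {v : List Bool} (hv : v ≠ []) : occurrences [] v = ∅ := by
  ext s
  simp only [Finset.notMem_empty, iff_false, mem_occurrences]
  have hs : s = ∅ := by
    apply Finset.eq_empty_of_forall_notMem
    intro i _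
    exact absurd i.isLt (by simp)
  subst hs
  rw [Finset.sort_empty]
  simpa [eq_comm] using hv

lemma occ_nonempty {u : List Bool} {b : Bool} {w : List Bool} {t : Finset (Fin u.length)}
    (ht : t ∈ occurrences u (b :: w)) : t.Nonempty := by
  rw [mem_occurrences] at ht
  rcases Finset.eq_empty_or_nonempty t with rfl | h
  · rw [Finset.sort_empty] at ht; simp at ht
  · exact h

lemma map_mem_occurrences {x y : List Bool} (f : Fin x.length ↪ Fin y.length)
    (hf : StrictMono f) (hget : ∀ i, y.get (f i) = x.get i)
    (t : Finset (Fin x.length)) (v : List Bool) :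
    t.map f ∈ occurrences y v ↔ t ∈ occurrences x v := by
  rw [mem_occurrences, mem_occurrences, sortMap f hf, List.map_map,
    show y.get ∘ f = x.get from funext hget]

/-! ### zerosAfter lemmas -/

lemma zerosAfter_nil : zerosAfter [] ∅ = 0 := by
  simp [zerosAfter]

lemma zerosAfter_cons_empty (a : Bool) (u : List Bool) :
    zerosAfter (a :: u) ∅ = (if a = false then 1 else 0) + zerosAfter u ∅ := by
  unfold zerosAfter
  rw [Finset.card_filter, Finset.card_filter]
  erw [Fin.sum_univ_succ]
  simp

lemma zerosAfter_cons_map (a : Bool) (u : List Bool) {s : Finset (Fin u.length)}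
    (hs : s.Nonempty) :
    zerosAfter (a :: u) (s.map (Fin.succEmb u.length)) = zerosAfter u s := by
  obtain ⟨i0, hi0⟩ := hs
  unfold zerosAfter
  rw [Finset.card_filter, Finset.card_filter]
  erw [Fin.sum_univ_succ]
  rw [if_neg, zero_add]
  · refine Finset.sum_congr rfl fun j _ => ?_
    refine if_congr (and_congr ?_ (by rw [List.get_cons_succ'])) rfl rfl
    constructor
    · intro h i hi
      exact Fin.succ_lt_succ_iff.mp (h _ (Finset.mem_map_of_mem _ hi))
    · intro h i hi
      obtain ⟨i', hi', rfl⟩ := Finset.mem_map.mp hi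
      exact Fin.succ_lt_succ_iff.mpr (h i' hi')
  · rintro ⟨h, -⟩
    exact absurd (h _ (Finset.mem_map_of_mem _ hi0)) (Fin.not_lt_zero _)

lemma zerosAfter_cons_insert (a : Bool) (u : List Bool) (s : Finset (Fin u.length)) :
    zerosAfter (a :: u) (insert (0 : Fin (u.length + 1)) (s.map (Fin.succEmb u.length)))
      = zerosAfter u s := by
  unfold zerosAfter
  rw [Finset.card_filter, Finset.card_filter]
  erw [Fin.sum_univ_succ]
  rw [if_neg, zero_add]
  · refine Finset.sum_congr rfl fun j _ => ?_
    refine if_congr (and_congr ?_ (by rw [List.get_cons_succ'])) rfl rfl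
    constructor
    · intro h i hi
      exact Fin.succ_lt_succ_iff.mp (h _ (Finset.mem_insert_of_mem (Finset.mem_map_of_mem _ hi)))
    · intro h i hi
      rcases Finset.mem_insert.mp hi with rfl | hi
      · exact Fin.succ_pos j
      · obtain ⟨i', hi', rfl⟩ := Finset.mem_map.mp hi
        exact Fin.succ_lt_succ_iff.mpr (h i' hi')
  · rintro ⟨h, -⟩
    exact absurd (h _ (Finset.mem_insert_self _ _)) (Fin.not_lt_zero _)

lemma wb_rep : ∀ (u : List Bool) (j : ℕ),
    wb u (List.replicate j false) = (zerosAfter u ∅).choose j := by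
  intro u
  induction u with
  | nil =>
    intro j
    cases j with
    | zero => simp
    | succ j' =>
      rw [zerosAfter_nil, Nat.choose_eq_zero_of_lt (Nat.succ_pos j'), List.replicate_succ]
      rfl
  | cons a u ih =>
    intro j
    cases j with
    | zero => simp
    | succ j' =>
      rw [List.replicate_succ, wb_cons_cons, ← List.replicate_succ, ih (j' + 1), ih j',
        zerosAfter_cons_empty]
      by_cases ha : a = false
      · rw [if_pos ha, if_pos ha, Nat.add_comm 1, Nat.choose_succ_succ]
        simp only [Nat.succ_eq_add_one]
        omega
      · rw [if_neg ha, if_neg ha, Nat.zero_add]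
        omega

/-! ### Decomposition of occurrences of a cons -/

lemma get_cons_succEmb (a : Bool) (u : List Bool) (i : Fin u.length) :
    (a :: u).get (Fin.succEmb u.length i) = u.get i := List.get_cons_succ'

def insEmb (n : ℕ) : Finset (Fin n) ↪ Finset (Fin (n + 1)) where
  toFun t := insert 0 (t.map (Fin.succEmb n))
  inj' := by
    intro t1 t2 h
    have h1 := congrArg (fun x : Finset (Fin (n + 1)) => x.erase 0) h
    simp only at h1
    rw [Finset.erase_insert (zero_not_mem_map_succ t1),
      Finset.erase_insert (zero_not_mem_map_succ t2)] at h1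
    exact Finset.map_injective _ h1

lemma occ_filter_not_mem (a : Bool) (u : List Bool) (v : List Bool) :
    (occurrences (a :: u) v).filter (fun s => (0 : Fin (u.length + 1)) ∉ s) =
      (occurrences u v).map (Finset.mapEmbedding (Fin.succEmb u.length)).toEmbedding := by
  ext s
  simp only [Finset.mem_filter, Finset.mem_map, RelEmbedding.coe_toEmbedding,
    Finset.mapEmbedding_apply]
  constructor
  · rintro ⟨hocc, h0⟩
    obtain ⟨t, rfl⟩ := exists_map_succ s h0
    exact ⟨t, (map_mem_occurrences (x := u) (y := a :: u) _ Fin.strictMono_succ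
      (get_cons_succEmb a u) t v).mp hocc, rfl⟩
  · rintro ⟨t, ht, rfl⟩
    exact ⟨(map_mem_occurrences (x := u) (y := a :: u) _ Fin.strictMono_succ
      (get_cons_succEmb a u) t v).mpr ht, zero_not_mem_map_succ t⟩

lemma occ_cons_mem_zero {a b : Bool} {u w : List Bool} {s : Finset (Fin (u.length + 1))}
    (hocc : s ∈ occurrences (a :: u) (b :: w)) (h0 : (0 : Fin (u.length + 1)) ∈ s) :
    a = b ∧ ∃ t : Finset (Fin u.length),
      s = insert 0 (t.map (Fin.succEmb u.length)) ∧ t ∈ occurrences u w := by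
  have h0e : (0 : Fin (u.length + 1)) ∉ s.erase 0 := Finset.notMem_erase _ _
  obtain ⟨t, ht⟩ := exists_map_succ (s.erase 0) h0e
  have hs : s = insert 0 (t.map (Fin.succEmb u.length)) := by
    rw [← ht, Finset.insert_erase h0]
  rw [mem_occurrences, hs] at hocc
  erw [sort_insert_zero _ (zero_not_mem_map_succ t)] at hocc
  rw [List.map_cons] at hocc
  have hget0 : (a :: u).get (0 : Fin (u.length + 1)) = a := rfl
  rw [hget0] at hocc
  obtain ⟨hab, htail⟩ := List.cons_eq_cons.mp hocc
  refine ⟨hab, t, hs, ?_⟩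
  exact (map_mem_occurrences (x := u) (y := a :: u) _ Fin.strictMono_succ (get_cons_succEmb a u) t w).mp
    (mem_occurrences.mpr htail)

lemma insert_mem_occ (a : Bool) (u w : List Bool) (t : Finset (Fin u.length))
    (ht : t ∈ occurrences u w) :
    insert (0 : Fin (u.length + 1)) (t.map (Fin.succEmb u.length))
      ∈ occurrences (a :: u) (a :: w) := by
  have h2 := (map_mem_occurrences (x := u) (y := a :: u) (Fin.succEmb u.length) Fin.strictMono_succ
    (get_cons_succEmb a u) t w).mpr ht
  rw [mem_occurrences] at h2 ⊢
  erw [sort_insert_zero _ (zero_not_mem_map_succ t)]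
  rw [List.map_cons]
  exact congrArg₂ List.cons rfl h2

lemma occ_filter_mem (a b : Bool) (u w : List Bool) :
    (occurrences (a :: u) (b :: w)).filter (fun s => (0 : Fin (u.length + 1)) ∈ s) =
      if a = b then (occurrences u w).map (insEmb u.length) else ∅ := by
  by_cases hab : a = b
  · subst hab
    rw [if_pos rfl]
    ext s
    simp only [Finset.mem_filter, Finset.mem_map]
    constructor
    · rintro ⟨hocc, h0⟩
      obtain ⟨-, t, hs, ht⟩ := occ_cons_mem_zero hocc h0
      exact ⟨t, ht, hs.symm⟩
    · rintro ⟨t, ht, rfl⟩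
      exact ⟨insert_mem_occ a u w t ht, Finset.mem_insert_self _ _⟩
  · rw [if_neg hab, Finset.filter_eq_empty_iff.mpr]
    intro s hs h0
    exact hab (occ_cons_mem_zero hs h0).1

/-! ### The key lemma -/

lemma star (j : ℕ) : ∀ (u v : List Bool),
    wb u (v ++ List.replicate j false) =
      ∑ s ∈ occurrences u v, (zerosAfter u s).choose j := by
  intro u
  induction u with
  | nil =>
    intro v
    cases v with
    | nil =>
      rw [occurrences_nil_right, Finset.sum_singleton, List.nil_append, wb_rep]
    | cons b w =>
      rw [occurrences_nil_left (by simp), Finset.sum_empty, wb_nil_left' (by simp)]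
  | cons a u ih =>
    intro v
    cases v with
    | nil =>
      rw [occurrences_nil_right, Finset.sum_singleton, List.nil_append, wb_rep]
    | cons b w =>
      have key := Finset.sum_filter_add_sum_filter_not (occurrences (a :: u) (b :: w))
        (fun s => (0 : Fin (u.length + 1)) ∈ s) (fun s => (zerosAfter (a :: u) s).choose j)
      rw [← key]
      have h1 : ∑ s ∈ (occurrences (a :: u) (b :: w)).filter
            (fun s => ¬ (0 : Fin (u.length + 1)) ∈ s),
            (zerosAfter (a :: u) s).choose j
          = wb u ((b :: w) ++ List.replicate j false) := by
        rw [occ_filter_not_mem, Finset.sum_map, ih (b :: w)]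
        refine Finset.sum_congr rfl fun t ht => ?_
        show (zerosAfter (a :: u) (t.map (Fin.succEmb u.length))).choose j = _
        rw [zerosAfter_cons_map a u (occ_nonempty ht)]
      have h2 : ∑ s ∈ (occurrences (a :: u) (b :: w)).filter
            (fun s => (0 : Fin (u.length + 1)) ∈ s),
            (zerosAfter (a :: u) s).choose j
          = if a = b then wb u (w ++ List.replicate j false) else 0 := by
        by_cases hab : a = b
        · subst hab
          rw [if_pos rfl, occ_filter_mem a a u w, if_pos rfl, Finset.sum_map, ih w]
          refine Finset.sum_congr rfl fun t ht => ?_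
          show (zerosAfter (a :: u)
            (insert (0 : Fin (u.length + 1)) (t.map (Fin.succEmb u.length)))).choose j = _
          rw [zerosAfter_cons_insert]
        · rw [if_neg hab, occ_filter_mem a b u w, if_neg hab, Finset.sum_empty]
      rw [h1, h2]
      exact Nat.add_comm (wb u (b :: (w ++ List.replicate j false)))
        (if a = b then wb u (w ++ List.replicate j false) else 0)

/-! ### Transfer across appended zeros -/

lemma get_append_castLE (u x : List Bool) (h : u.length ≤ (u ++ x).length) (i : Fin u.length) :
    (u ++ x).get (Fin.castLEEmb h i) = u.get i := by
  rw [List.get_eq_getElem, List.get_eq_getElem]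
  exact List.getElem_append_left i.isLt

lemma zerosAfter_map_castLE (u : List Bool) (N : ℕ)
    (h : u.length ≤ (u ++ List.replicate N false).length) (t : Finset (Fin u.length)) :
    zerosAfter (u ++ List.replicate N false) (t.map (Fin.castLEEmb h)) = N + zerosAfter u t := by
  have hlen : (u ++ List.replicate N false).length = u.length + N := by simp
  unfold zerosAfter
  rw [Finset.card_filter, Finset.card_filter]
  rw [← Finset.sum_filter_add_sum_filter_not
    (Finset.univ : Finset (Fin (u ++ List.replicate N false).length))
    (fun j => (j : ℕ) < u.length)]
  have hA : ∑ j ∈ Finset.univ.filter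
        (fun j : Fin (u ++ List.replicate N false).length => (j : ℕ) < u.length),
        (if (∀ i ∈ t.map (Fin.castLEEmb h), i < j)
            ∧ (u ++ List.replicate N false).get j = false then 1 else 0)
      = ∑ j : Fin u.length, (if (∀ i ∈ t, i < j) ∧ u.get j = false then 1 else 0) := by
    rw [filter_val_lt_eq h, Finset.sum_map]
    refine Finset.sum_congr rfl fun j _ => ?_
    refine if_congr (and_congr ?_ (by rw [get_append_castLE u _ h j])) rfl rfl
    constructor
    · intro hall i hi
      exact hall _ (Finset.mem_map_of_mem _ hi)
    · intro hall i hi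
      obtain ⟨i', hi', rfl⟩ := Finset.mem_map.mp hi
      exact hall i' hi'
  have hB : ∑ j ∈ Finset.univ.filter
        (fun j : Fin (u ++ List.replicate N false).length => ¬ (j : ℕ) < u.length),
        (if (∀ i ∈ t.map (Fin.castLEEmb h), i < j)
            ∧ (u ++ List.replicate N false).get j = false then 1 else 0) = N := by
    have hone : ∀ j ∈ Finset.univ.filter
        (fun j : Fin (u ++ List.replicate N false).length => ¬ (j : ℕ) < u.length),
        (if (∀ i ∈ t.map (Fin.castLEEmb h), i < j)
            ∧ (u ++ List.replicate N false).get j = false then 1 else 0) = 1 := by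
      intro j hj
      rw [Finset.mem_filter] at hj
      have hju : u.length ≤ (j : ℕ) := Nat.le_of_not_lt hj.2
      rw [if_pos]
      constructor
      · intro i hi
        obtain ⟨i', hi', rfl⟩ := Finset.mem_map.mp hi
        have h1 : ((Fin.castLEEmb h) i' : ℕ) < u.length := i'.isLt
        rw [Fin.lt_def]
        omega
      · rw [List.get_eq_getElem, List.getElem_append_right hju]
        simp
    rw [Finset.sum_congr rfl hone, Finset.sum_const, smul_eq_mul, mul_one]
    have h2 := Finset.card_filter_add_card_filter_not
      (s := (Finset.univ : Finset (Fin (u ++ List.replicate N false).length)))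
      (p := fun j => (j : ℕ) < u.length)
    rw [filter_val_lt_eq h, Finset.card_map, Finset.card_univ, Finset.card_univ,
      Fintype.card_fin, Fintype.card_fin] at h2
    omega
  rw [hA, hB]
  omega

lemma transfer (N : ℕ) (u v : List Bool) :
    ∑ s ∈ occurrences (u ++ List.replicate N false) v,
        (zerosAfter (u ++ List.replicate N false) s).choose N =
      ∑ t ∈ occurrences u v, (N + zerosAfter u t).choose N := by
  have h : u.length ≤ (u ++ List.replicate N false).length := by simp
  have hlen : (u ++ List.replicate N false).length = u.length + N := by simp
  rw [← Finset.sum_filter_add_sum_filter_not (occurrences (u ++ List.replicate N false) v)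
    (fun s : Finset (Fin (u ++ List.replicate N false).length) => ∀ i ∈ s, (i : ℕ) < u.length)]
  have hB : ∑ s ∈ (occurrences (u ++ List.replicate N false) v).filter
        (fun s : Finset (Fin (u ++ List.replicate N false).length) => ¬ ∀ i ∈ s, (i : ℕ) < u.length),
        (zerosAfter (u ++ List.replicate N false) s).choose N = 0 := by
    refine Finset.sum_eq_zero fun s hs => ?_
    rw [Finset.mem_filter] at hs
    have hs2 := hs.2
    push_neg at hs2
    obtain ⟨i0, hi0, hi0u⟩ := hs2
    have hza : zerosAfter (u ++ List.replicate N false) s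
        ≤ (u ++ List.replicate N false).length - 1 - (i0 : ℕ) := by
      unfold zerosAfter
      rw [← Fin.card_Ioi i0]
      exact Finset.card_le_card fun j hj =>
        Finset.mem_Ioi.mpr ((Finset.mem_filter.mp hj).2.1 i0 hi0)
    have hi0lt := i0.isLt
    exact Nat.choose_eq_zero_of_lt (by omega)
  have hA : ∑ s ∈ (occurrences (u ++ List.replicate N false) v).filter
        (fun s : Finset (Fin (u ++ List.replicate N false).length) => ∀ i ∈ s, (i : ℕ) < u.length),
        (zerosAfter (u ++ List.replicate N false) s).choose N
      = ∑ t ∈ occurrences u v, (N + zerosAfter u t).choose N := by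
    have hfil : (occurrences (u ++ List.replicate N false) v).filter
          (fun s : Finset (Fin (u ++ List.replicate N false).length) => ∀ i ∈ s, (i : ℕ) < u.length)
        = (occurrences u v).map (Finset.mapEmbedding (Fin.castLEEmb h)).toEmbedding := by
      ext s
      simp only [Finset.mem_filter, Finset.mem_map, RelEmbedding.coe_toEmbedding,
        Finset.mapEmbedding_apply]
      constructor
      · rintro ⟨hocc, hall⟩
        obtain ⟨t, rfl⟩ := exists_map_castLE h s hall
        exact ⟨t, (map_mem_occurrences (x := u) (y := u ++ List.replicate N false)
          _ (castLE_strictMono h) (get_append_castLE u _ h) t v).mp hocc, rfl⟩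
      · rintro ⟨t, ht, rfl⟩
        refine ⟨(map_mem_occurrences (x := u) (y := u ++ List.replicate N false)
          _ (castLE_strictMono h) (get_append_castLE u _ h) t v).mpr ht, ?_⟩
        intro i hi
        obtain ⟨i', hi', rfl⟩ := Finset.mem_map.mp hi
        exact i'.isLt
    rw [hfil, Finset.sum_map]
    refine Finset.sum_congr rfl fun t ht => ?_
    show (zerosAfter _ (t.map (Fin.castLEEmb h))).choose N = _
    rw [zerosAfter_map_castLE u N h t]
  rw [hA, hB, add_zero]

theorem stmt_16 (u v : List Bool) (hu : u ≠ []) (k : ℕ) (hk : u.length < 2 ^ k)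
    (hv : 0 < wb u v) :
    wb (u ++ List.replicate (2 ^ k) false ++ [true])
       (v ++ List.replicate (2 ^ k) false ++ [true]) =
      ∑ s ∈ occurrences u v, Nat.choose (2 ^ k + zerosAfter u s) (2 ^ k) := by
  rw [wb_append_singleton (u ++ List.replicate (2 ^ k) false)
    (v ++ List.replicate (2 ^ k) false) true true, if_pos rfl]
  have hzero : wb (u ++ List.replicate (2 ^ k) false)
      (v ++ List.replicate (2 ^ k) false ++ [true]) = 0 := by
    by_contra hne
    have hsub := sublist_of_wb_ne_zero _ _ hne
    have h2 : (List.replicate (2 ^ k) false ++ [true]).Sublist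
        (u ++ List.replicate (2 ^ k) false) := by
      refine List.Sublist.trans ?_ hsub
      rw [List.append_assoc]
      exact List.sublist_append_right _ _
    rw [List.sublist_append_iff] at h2
    obtain ⟨l1, l2, heq, hs1, hs2⟩ := h2
    obtain ⟨k', hk', rfl⟩ := List.sublist_replicate_iff.mp hs2
    have hlen1 : l1.length ≤ u.length := hs1.length_le
    have hl1 : l1 = (List.replicate (2 ^ k) false ++ [true]).take l1.length := by
      rw [heq, List.take_left]
    have hcount1 : List.count true l1 = 0 := by
      rw [hl1, List.take_append_of_le_length (by rw [List.length_replicate]; omega),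
        List.take_replicate, List.count_replicate]
      simp
    have hcount2 : List.count true (List.replicate (2 ^ k) false ++ [true]) = 1 := by
      rw [List.count_append, List.count_replicate]
      simp
    rw [heq, List.count_append, hcount1, List.count_replicate] at hcount2
    simp at hcount2
  rw [hzero, zero_add, star (2 ^ k) (u ++ List.replicate (2 ^ k) false) v, transfer (2 ^ k) u v]
end
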